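/- Let G be a locally compact group with Haar measure ν, U a relatively compact open symmetric neighborhood of the identity, and n ∈ ℕ. Then there exists a regular compact set K (i.e., K equals the closure of its interior) with Uⁿ ⊆ K ⊆ U^{n+1} and ν(∂K) = 0. -/

import Mathlib

open MeasureTheory Set Pointwise

theorem stmt_13 {G : Type*} [Group G] [TopologicalSpace G] [IsTopologicalGroup G]
    [LocallyCompactSpace G] [MeasurableSpace G] [BorelSpace G]
    (ν : Measure G) [ν.IsHaarMeasure]
    (U : Set G) (hUopen : IsOpen U) (hUone : (1 : G) ∈ U) (hUsymm : U⁻¹ = U)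
    (hUrc : IsCompact (closure U)) (n : ℕ) :
    ∃ K : Set G, IsCompact K ∧ K = closure (interior K) ∧
      U ^ n ⊆ K ∧ K ⊆ U ^ (n + 1) ∧ ν (frontier K) = 0 := by
  -- `U^(n+1)` is open
  have hV : IsOpen (U ^ (n + 1)) := by
    rw [pow_succ]
    exact hUopen.mul_left
  -- closure (U^n) ⊆ U^(n+1)
  have hsub : closure (U ^ n) ⊆ U ^ (n + 1) := by
    rw [pow_succ, ← hUopen.closure_mul (U ^ n)]
    exact fun x hx => ⟨x, hx, 1, hUone, mul_one x⟩
  -- closure (U^n) is compact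
  have hpow' : ∀ m : ℕ, IsCompact ((closure U) ^ (m + 1)) := by
    intro m
    induction m with
    | zero => simpa using hUrc
    | succ k ih => rw [pow_succ]; exact ih.mul hUrc
  have hpow : IsCompact ((closure U) ^ (n + 1)) := hpow' n
  have hKn : IsCompact (closure (U ^ n)) :=
    IsCompact.of_isClosed_subset hpow isClosed_closure
      (hsub.trans (Set.pow_subset_pow_left subset_closure))
  -- Urysohn
  obtain ⟨f, hf1, hf0, hfc, hf01⟩ :=
    exists_continuous_one_zero_of_isCompact hKn hV.isClosed_compl
      (disjoint_compl_right_iff_subset.mpr hsub)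
  -- level sets
  set A : ℝ → Set G := fun t => {x | f x = t} ∩ tsupport f with hA
  have hAm : ∀ t, MeasurableSet (A t) :=
    fun t => ((f.continuous.measurable (measurableSet_singleton t)).inter
      (isClosed_tsupport f).measurableSet)
  have hAd : Pairwise (Function.onFun Disjoint A) := by
    intro s t hst
    simp only [Function.onFun, hA]
    refine Set.disjoint_left.2 ?_
    rintro x ⟨hx1, -⟩ ⟨hx2, -⟩
    exact hst (hx1.symm.trans hx2)
  have hfin : ν (⋃ t, A t) ≠ ⊤ := by
    refine ne_of_lt (lt_of_le_of_lt (measure_mono ?_) hfc.measure_lt_top)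
    exact Set.iUnion_subset fun t => Set.inter_subset_right
  have hcnt := MeasureTheory.Measure.countable_meas_pos_of_disjoint_of_meas_iUnion_ne_top
    ν hAm hAd hfin
  -- pick t ∈ (0,1) with ν (A t) = 0
  obtain ⟨t, htI, htS⟩ : ∃ t, t ∈ Set.Ioo (0 : ℝ) 1 ∧ t ∉ {t : ℝ | 0 < ν (A t)} := by
    by_contra h
    push_neg at h
    have hIoo : (Set.Ioo (0 : ℝ) 1).Countable := hcnt.mono fun t ht => h t ht
    have hz := hIoo.measure_zero (volume : Measure ℝ)
    rw [Real.volume_Ioo] at hz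
    simp at hz
  have hνA : ν (A t) = 0 := by
    by_contra h
    exact htS (pos_iff_ne_zero.2 h)
  obtain ⟨ht0, ht1⟩ := htI
  have hSopen : IsOpen {x | t < f x} := isOpen_lt continuous_const f.continuous
  have hcl : closure {x | t < f x} ⊆ {x | t ≤ f x} :=
    closure_minimal (fun x (hx : t < f x) => (hx.le : t ≤ f x))
      (isClosed_le continuous_const f.continuous)
  -- the set K
  refine ⟨closure {x | t < f x}, ?_, ?_, ?_, ?_, ?_⟩
  -- compactness: closed subset of tsupport f
  · refine IsCompact.of_isClosed_subset hfc isClosed_closure ?_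
    refine closure_mono (fun x hx => Function.mem_support.2 ?_)
    intro h0
    rw [mem_setOf_eq, h0] at hx
    exact absurd hx (not_lt.2 ht0.le)
  -- regularity
  · refine subset_antisymm ?_ ?_
    · exact closure_mono (interior_maximal subset_closure hSopen)
    · refine (closure_mono interior_subset).trans ?_
      rw [closure_closure]
  -- U^n ⊆ K
  · intro x hx
    refine subset_closure ?_
    have : f x = 1 := hf1 (subset_closure hx)
    show t < f x
    rw [this]; exact ht1
  -- K ⊆ U^(n+1)
  · intro x hx
    have hfx : t ≤ f x := hcl hx
    by_contra hxV
    have : f x = 0 := hf0 hxV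
    rw [this] at hfx
    exact absurd hfx (not_le.2 ht0)
  -- null frontier
  · refine measure_mono_null ?_ hνA
    intro x hx
    have hx1 : x ∈ closure {x | t < f x} := by
      have := hx.1
      rwa [closure_closure] at this
    have hle : t ≤ f x := hcl hx1
    have hnotlt : ¬ t < f x := fun hlt =>
      hx.2 (interior_maximal subset_closure hSopen hlt)
    have hfx : f x = t := le_antisymm (not_lt.1 hnotlt) hle
    refine ⟨hfx, subset_closure ?_⟩
    show f x ≠ 0
    rw [hfx]; exact ne_of_gt ht0
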